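/- Let λ ≥ 0, h > 0, 1 < α < 2, and with g_j^α = (-1)^j binomial(α,j) and weights ω_j^α defined by ω_0^α = r_1 g_0^α, ω_1^α = r_1 g_1^α + r_2 g_0^α - (r_1 e^{λh}+r_2+r_3 e^{-λh})(1-e^{-λh})^α, ω_j^α = r_1 g_j^α + r_2 g_{j-1}^α + r_3 g_{j-2}^α for j ≥ 2, where r_1 = α/2+r_3, r_2 = (2-α)/2-2r_3. Then ∑_{j=0}^{∞} e^{-(j-1)λh} ω_j^α = 0. -/

import Mathlib

/-- Generalized binomial coefficient `binomial(x, k) = x(x-1)⋯(x-k+1)/k!`. -/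
noncomputable def genBinom (x : ℝ) (k : ℕ) : ℝ :=
  (∏ i ∈ Finset.range k, (x - i)) / (Nat.factorial k)

/-- Grünwald coefficients `g_j^α = (-1)^j binomial(α, j)`. -/
noncomputable def g (x : ℝ) (j : ℕ) : ℝ := (-1 : ℝ) ^ j * genBinom x j

lemma genBinom_zero (x : ℝ) : genBinom x 0 = 1 := by simp [genBinom]

lemma genBinom_one (x : ℝ) : genBinom x 1 = x := by simp [genBinom]

lemma genBinom_succ (x : ℝ) (k : ℕ) :
    genBinom x (k + 1) = genBinom x k * (x - k) / (k + 1) := by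
  simp only [genBinom, Finset.prod_range_succ, Nat.factorial_succ]
  push_cast
  rw [div_mul_eq_mul_div, div_div, mul_comm ((k:ℝ)+1)]

lemma g_zero (x : ℝ) : g x 0 = 1 := by simp [g, genBinom_zero]
lemma g_one (x : ℝ) : g x 1 = -x := by simp [g, genBinom_one]

lemma g_succ (x : ℝ) (k : ℕ) :
    g x (k + 1) = g x k * ((k : ℝ) - x) / (k + 1) := by
  simp only [g, pow_succ, genBinom_succ]
  ring

lemma g_two (x : ℝ) : g x 2 = x * (x - 1) / 2 := by
  have := g_succ x 1
  rw [g_one] at this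
  norm_num at this
  rw [this]; ring

/-- Pascal's rule for generalized binomial coefficients. -/
lemma genBinom_pascal (x : ℝ) (k : ℕ) :
    genBinom x (k + 1) = genBinom (x - 1) (k + 1) + genBinom (x - 1) k := by
  have hshift : (∏ i ∈ Finset.range (k + 1), (x - i))
      = x * ∏ i ∈ Finset.range k, (x - 1 - i) := by
    rw [Finset.prod_range_succ']
    have : ∀ i ∈ Finset.range k, (x - ((i + 1 : ℕ) : ℝ)) = (x - 1 - i) := by
      intro i _; push_cast; ring
    rw [Finset.prod_congr rfl this]
    push_cast; ring
  have hk : (Nat.factorial k : ℝ) ≠ 0 := Nat.cast_ne_zero.mpr (Nat.factorial_ne_zero k)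
  have hk1 : ((k : ℝ) + 1) ≠ 0 := by positivity
  simp only [genBinom, Finset.prod_range_succ, Nat.factorial_succ] at *
  push_cast at *
  rw [hshift]
  field_simp
  ring

section Alpha
variable {α : ℝ} (hα1 : 1 < α) (hα2 : α < 2)

include hα1 hα2

lemma g_nonneg : ∀ k, 0 ≤ g α (k + 2) := by
  intro k
  induction k with
  | zero => rw [g_two]; nlinarith
  | succ n ih =>
      rw [show n + 1 + 2 = (n + 2) + 1 from rfl, g_succ]
      have h1 : (0:ℝ) ≤ ((n:ℝ) + 2) - α := by push_cast; linarith
      have h2 : (0:ℝ) < ((n:ℝ) + 2) + 1 := by positivity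
      push_cast
      positivity

lemma g_abs_le : ∀ k, |g α k| ≤ α := by
  have key : ∀ k, |g α (k + 1)| ≤ α := by
    intro k
    induction k with
    | zero => rw [g_one]; rw [abs_neg, abs_of_pos (by linarith)]
    | succ n ih =>
        rw [show n + 1 + 1 = (n + 1) + 1 from rfl, g_succ, abs_div, abs_mul]
        have h1 : |((n:ℝ) + 1) - α| ≤ (n:ℝ) + 1 + 1 := by
          rw [abs_le]; constructor <;> push_cast <;> linarith
        have h2 : |((n:ℝ) + 1) + 1| = (n:ℝ) + 2 := by
          rw [abs_of_pos] <;> push_cast <;> linarith [Nat.cast_nonneg (α := ℝ) n]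
        push_cast at *
        rw [h2]
        rw [div_le_iff₀ (by linarith [Nat.cast_nonneg (α := ℝ) n])]
        have h3 : |g α (n + 1)| * |(n:ℝ) + 1 - α| ≤ α * ((n:ℝ) + 2) := by
          apply mul_le_mul ih (by linarith) (abs_nonneg _) (by linarith)
        linarith
  intro k
  match k with
  | 0 => rw [g_zero]; rw [abs_one]; linarith
  | (n+1) => exact key n

/-- Partial sums of the `g` series. -/
lemma g_partial_sum : ∀ N : ℕ, ∑ k ∈ Finset.range (N + 1), g α k
    = (-1 : ℝ) ^ N * genBinom (α - 1) N := by
  intro N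
  induction N with
  | zero => simp [g_zero, genBinom_zero]
  | succ n ih =>
      rw [Finset.sum_range_succ, ih]
      have hp := genBinom_pascal α n
      simp only [g, pow_succ]
      rw [hp]
      ring

lemma genBinom_abs_le : ∀ N : ℕ, |genBinom (α - 1) (N + 1)| ≤ (α - 1) / (N + 1) := by
  intro N
  induction N with
  | zero => rw [genBinom_one, abs_of_pos (by linarith)]; norm_num
  | succ n ih =>
      rw [genBinom_succ, abs_div, abs_mul]
      have hpos : (0:ℝ) < (n:ℝ) + 1 := by positivity
      have h2 : |((n:ℝ)+1) + 1| = (n:ℝ) + 2 := by rw [abs_of_pos] <;> push_cast <;> linarith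
      have h1 : |α - 1 - ((n:ℝ)+1)| ≤ (n:ℝ) + 1 := by
        rw [abs_le]; constructor <;> push_cast <;> linarith
      push_cast at *
      rw [h2, div_le_div_iff₀ (by linarith) (by linarith)]
      have h3 : |genBinom (α - 1) (n + 1)| * |α - 1 - ((n:ℝ) + 1)| ≤ ((α-1)/((n:ℝ)+1)) * ((n:ℝ)+1) := by
        apply mul_le_mul ih h1 (abs_nonneg _) (by apply div_nonneg <;> linarith)
      rw [div_mul_cancel₀ _ (by linarith : ((n:ℝ)+1) ≠ 0)] at h3
      nlinarith [abs_nonneg (genBinom (α-1) (n+1)), abs_nonneg (α - 1 - ((n:ℝ)+1))]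

end Alpha

section Alpha2
variable {α : ℝ} (hα1 : 1 < α) (hα2 : α < 2)
include hα1 hα2

lemma g_summable : Summable (fun n => g α n) := by
  rw [← summable_nat_add_iff 2]
  apply summable_of_sum_range_le (c := 2 * α) (fun n => g_nonneg hα1 hα2 n)
  intro n
  have hps := g_partial_sum (α := α) hα1 hα2 (n + 1)
  have hsum : ∑ k ∈ Finset.range (n + 1 + 1), g α k
      = (∑ i ∈ Finset.range n, g α (i + 2)) + g α 1 + g α 0 := by
    rw [Finset.sum_range_succ', Finset.sum_range_succ']
  rw [hsum, g_zero, g_one] at hps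
  have hb : |(-1 : ℝ) ^ (n+1) * genBinom (α - 1) (n+1)| ≤ α - 1 := by
    rw [abs_mul, abs_pow, abs_neg, abs_one, one_pow, one_mul]
    calc |genBinom (α - 1) (n+1)| ≤ (α - 1) / ((n:ℝ) + 1) := genBinom_abs_le hα1 hα2 n
    _ ≤ (α - 1) / 1 := by
        apply div_le_div_of_nonneg_left (by linarith) one_pos
        push_cast; linarith [Nat.cast_nonneg (α := ℝ) n]
    _ = α - 1 := by ring
  rw [abs_le] at hb
  linarith [hb.2]

lemma g_abs_summable : Summable (fun n => |g α n|) := by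
  rw [← summable_nat_add_iff 2]
  have : (fun n => |g α (n + 2)|) = fun n => g α (n + 2) := by
    funext n; exact abs_of_nonneg (g_nonneg hα1 hα2 n)
  rw [this]
  exact (summable_nat_add_iff 2).mpr (g_summable hα1 hα2)

lemma g_hasSum_zero : HasSum (fun n => g α n) 0 := by
  have hs := g_summable hα1 hα2
  have hts := hs.hasSum
  have htend := hts.tendsto_sum_nat
  have htend1 : Filter.Tendsto (fun N => ∑ k ∈ Finset.range (N + 1), g α k)
      Filter.atTop (nhds (∑' n, g α n)) :=
    htend.comp (Filter.tendsto_add_atTop_nat 1)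
  have htend2 : Filter.Tendsto (fun N => ∑ k ∈ Finset.range (N + 1), g α k)
      Filter.atTop (nhds 0) := by
    have heq : (fun N => ∑ k ∈ Finset.range (N + 1), g α k)
        = fun N => (-1 : ℝ) ^ N * genBinom (α - 1) N := by
      funext N; exact g_partial_sum hα1 hα2 N
    rw [heq]
    have hbd : ∀ᶠ N in Filter.atTop, ‖(-1:ℝ)^N * genBinom (α-1) N‖ ≤ (α-1)/(N:ℕ) := by
      filter_upwards [Filter.eventually_ge_atTop 1] with N hN
      obtain ⟨M, rfl⟩ := Nat.exists_eq_add_of_le hN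
      rw [Real.norm_eq_abs, abs_mul, abs_pow, abs_neg, abs_one, one_pow, one_mul]
      rw [add_comm 1 M]
      exact_mod_cast genBinom_abs_le hα1 hα2 M
    exact squeeze_zero_norm' hbd (tendsto_const_div_atTop_nhds_zero_nat (α-1))
  have : (∑' n, g α n) = 0 := tendsto_nhds_unique htend1 htend2
  rwa [this] at hts

end Alpha2

section Alpha3
variable {α : ℝ} (hα1 : 1 < α) (hα2 : α < 2)
include hα1 hα2

lemma summable_g_pow {x : ℝ} (hx : |x| ≤ 1) : Summable (fun n => g α n * x ^ n) := by
  apply Summable.of_norm_bounded (g_abs_summable hα1 hα2)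
  intro n
  rw [Real.norm_eq_abs, abs_mul, abs_pow]
  calc |g α n| * |x| ^ n ≤ |g α n| * 1 ^ n := by
        gcongr
    _ = |g α n| := by rw [one_pow, mul_one]

lemma summable_deriv_bound {b : ℝ} (hb0 : 0 < b) (hb : b < 1) :
    Summable (fun n : ℕ => α * ((n : ℝ) * b ^ (n - 1))) := by
  have h0 : Summable (fun n : ℕ => (n : ℝ) * b ^ n) := by
    simpa using summable_pow_mul_geometric_of_norm_lt_one 1
      (by rwa [Real.norm_eq_abs, abs_of_pos hb0] : ‖b‖ < 1)
  have h1 := h0.mul_left (α / b)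
  apply h1.congr
  intro n
  cases n with
  | zero => simp
  | succ m =>
      have : b ^ (m + 1) = b ^ m * b := pow_succ b m
      rw [this, Nat.add_sub_cancel]
      field_simp

lemma summable_ng_pow {y : ℝ} (hy : |y| < 1) :
    Summable (fun n => g α n * ((n : ℝ) * y ^ (n - 1))) := by
  set b := (1 + |y|) / 2 with hbdef
  have hb0 : 0 < b := by positivity
  have hb1 : b < 1 := by rw [hbdef]; linarith
  have hyb : |y| ≤ b := by rw [hbdef]; linarith
  apply Summable.of_norm_bounded (summable_deriv_bound hα1 hα2 hb0 hb1)
  intro n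
  rw [Real.norm_eq_abs, abs_mul, abs_mul, Nat.abs_cast, abs_pow]
  have h1 : |g α n| * ((n:ℝ) * |y| ^ (n-1)) ≤ α * ((n:ℝ) * b ^ (n-1)) := by
    apply mul_le_mul (g_abs_le hα1 hα2 n) ?_ (by positivity) (by linarith)
    gcongr
  linarith [h1]

lemma summable_n_g_pow {y : ℝ} (hy : |y| < 1) :
    Summable (fun n : ℕ => (n : ℝ) * (g α n * y ^ n)) := by
  have h1 := (summable_ng_pow hα1 hα2 hy).mul_left y
  apply h1.congr
  intro n
  cases n with
  | zero => simp
  | succ m =>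
      have : y ^ (m + 1) = y * y ^ m := pow_succ' y m
      rw [this]
      push_cast
      ring

lemma hasDerivAt_fS {y : ℝ} (hy : |y| < 1) :
    HasDerivAt (fun x => ∑' n, g α n * x ^ n)
      (∑' n : ℕ, g α n * ((n : ℝ) * y ^ (n - 1))) y := by
  set b := (1 + |y|) / 2 with hbdef
  have hb0 : 0 < b := by positivity
  have hb1 : b < 1 := by rw [hbdef]; linarith
  have hyb : |y| < b := by rw [hbdef]; linarith
  apply hasDerivAt_tsum_of_isPreconnected (u := fun n : ℕ => α * ((n : ℝ) * b ^ (n - 1)))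
    (t := Set.Ioo (-b) b) (y₀ := 0)
    (summable_deriv_bound hα1 hα2 hb0 hb1) isOpen_Ioo (convex_Ioo _ _).isPreconnected
    (fun n z _ => (hasDerivAt_pow n z).const_mul (g α n))
    (fun n z hz => ?_) (by constructor <;> simpa using hb0)
    (summable_g_pow hα1 hα2 (by simp)) (abs_lt.mp hyb)
  have hzb : |z| ≤ b := le_of_lt (abs_lt.mpr ⟨hz.1, hz.2⟩)
  rw [Real.norm_eq_abs, abs_mul, abs_mul, Nat.abs_cast, abs_pow]
  apply mul_le_mul (g_abs_le hα1 hα2 n) ?_ (by positivity) (by linarith)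
  gcongr

lemma ode_identity {y : ℝ} (hy : |y| < 1) :
    (1 - y) * (∑' n : ℕ, g α n * ((n : ℝ) * y ^ (n - 1))) = -α * ∑' n, g α n * y ^ n := by
  have s1 := summable_ng_pow hα1 hα2 hy
  have s2 := summable_n_g_pow hα1 hα2 hy
  have s3 := summable_g_pow hα1 hα2 (le_of_lt hy)
  have hT : (∑' n : ℕ, g α n * ((n : ℝ) * y ^ (n - 1)))
      = ∑' n : ℕ, (((n : ℝ) - α) * (g α n * y ^ n)) := by
    rw [s1.tsum_eq_zero_add]
    simp only [Nat.cast_zero, zero_mul, mul_zero, zero_add]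
    apply tsum_congr
    intro n
    have hrec : g α (n + 1) * ((n:ℝ) + 1) = g α n * ((n:ℝ) - α) := by
      rw [g_succ]
      field_simp
    have hidx : (n + 1 : ℕ) - 1 = n := rfl
    rw [hidx]
    push_cast
    linear_combination (y ^ n) * hrec
  have hyT : y * (∑' n : ℕ, g α n * ((n : ℝ) * y ^ (n - 1)))
      = ∑' n : ℕ, (n : ℝ) * (g α n * y ^ n) := by
    rw [← tsum_mul_left]
    apply tsum_congr
    intro n
    cases n with
    | zero => simp
    | succ m =>
        have : y ^ (m + 1) = y * y ^ m := pow_succ' y m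
        rw [this]
        push_cast
        ring
  have hsplit : ∑' n : ℕ, (((n : ℝ) - α) * (g α n * y ^ n))
      = (∑' n : ℕ, (n : ℝ) * (g α n * y ^ n)) - α * ∑' n, g α n * y ^ n := by
    have hcg : ∀ n : ℕ, ((n : ℝ) - α) * (g α n * y ^ n)
        = (n : ℝ) * (g α n * y ^ n) - α * (g α n * y ^ n) := fun n => by ring
    rw [tsum_congr hcg, s2.tsum_sub (s3.mul_left α), tsum_mul_left]
  rw [sub_mul, one_mul, hyT, hT, hsplit]
  ring

end Alpha3

section Alpha4
variable {α : ℝ} (hα1 : 1 < α) (hα2 : α < 2)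
include hα1 hα2

lemma fS_eq {x : ℝ} (hx0 : 0 ≤ x) (hx1 : x < 1) :
    (∑' n, g α n * x ^ n) = (1 - x) ^ α := by
  set F : ℝ → ℝ := fun y => (∑' n, g α n * y ^ n) * (1 - y) ^ (-α) with hFdef
  have key : ∀ y ∈ Set.Ioo (-1:ℝ) 1, HasDerivAt F 0 y := by
    intro y hy
    have hy' : |y| < 1 := abs_lt.mpr ⟨hy.1, hy.2⟩
    have h1y : (0:ℝ) < 1 - y := by linarith [hy.2]
    have hd1 := hasDerivAt_fS hα1 hα2 hy'
    have hd2 : HasDerivAt (fun z : ℝ => (1 - z) ^ (-α)) (α * (1 - y) ^ (-α - 1)) y := by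
      have hinner : HasDerivAt (fun z : ℝ => 1 - z) (-1) y := by
        simpa using (hasDerivAt_id y).const_sub 1
      have houter := Real.hasDerivAt_rpow_const (x := 1 - y) (p := -α) (Or.inl (ne_of_gt h1y))
      have hcomp := houter.comp y hinner
      convert hcomp using 1
      · rfl
      · rfl
      · rfl
      ring
    have hmul := hd1.mul hd2
    convert hmul using 1
    · rfl
    · rfl
    · rfl
    have hode := ode_identity hα1 hα2 hy'
    have hrw : (1 - y) ^ (-α) = (1 - y) * (1 - y) ^ (-α - 1) := by
      have h := Real.rpow_add h1y 1 (-α - 1)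
      rw [Real.rpow_one, show 1 + (-α - 1) = -α by ring] at h
      exact h
    rw [hrw]
    linear_combination (-(1 - y) ^ (-α - 1)) * hode
  have hdiff : DifferentiableOn ℝ F (Set.Ioo (-1:ℝ) 1) :=
    fun y hy => ((key y hy).differentiableAt).differentiableWithinAt
  have hfd : ∀ y ∈ Set.Ioo (-1:ℝ) 1, fderivWithin ℝ F (Set.Ioo (-1:ℝ) 1) y = 0 := by
    intro y hy
    rw [fderivWithin_of_isOpen isOpen_Ioo hy, (key y hy).hasFDerivAt.fderiv]
    ext t
    simp
  have hmem : x ∈ Set.Ioo (-1:ℝ) 1 := ⟨by linarith, hx1⟩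
  have h0mem : (0:ℝ) ∈ Set.Ioo (-1:ℝ) 1 := ⟨by norm_num, by norm_num⟩
  have hconst := (convex_Ioo (-1:ℝ) 1).is_const_of_fderivWithin_eq_zero hdiff hfd hmem h0mem
  have hF0 : F 0 = 1 := by
    rw [hFdef]
    simp only
    have ht : (∑' n, g α n * (0:ℝ) ^ n) = 1 := by
      rw [tsum_eq_single 0 (fun n hn => by simp [zero_pow hn])]
      simp [g_zero]
    rw [ht, sub_zero, Real.one_rpow, mul_one]
  rw [hF0] at hconst
  have h1x : (0:ℝ) < 1 - x := by linarith
  have hrpos : (0:ℝ) < (1 - x) ^ α := Real.rpow_pos_of_pos h1x α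
  have hFx : (∑' n, g α n * x ^ n) * (1 - x) ^ (-α) = 1 := hconst
  rw [Real.rpow_neg (le_of_lt h1x)] at hFx
  field_simp at hFx
  linarith [hFx]

lemma key_hasSum {E : ℝ} (hE0 : 0 < E) (hE1 : E ≤ 1) :
    HasSum (fun n => g α n * E ^ n) ((1 - E) ^ α) := by
  rcases eq_or_lt_of_le hE1 with rfl | h
  · have h0 : ((1:ℝ) - 1) ^ α = 0 := by
      rw [sub_self, Real.zero_rpow (by linarith : α ≠ 0)]
    rw [h0]
    simpa using g_hasSum_zero hα1 hα2
  · have habs : |E| ≤ 1 := by rw [abs_of_pos hE0]; linarith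
    have hs := (summable_g_pow hα1 hα2 habs).hasSum
    rwa [fS_eq hα1 hα2 (le_of_lt hE0) h] at hs

end Alpha4

theorem stmt13 (α lam h r3 : ℝ) (hα1 : 1 < α) (hα2 : α < 2)
    (hlam : 0 ≤ lam) (hh : 0 < h)
    (w : ℕ → ℝ)
    (hw0 : w 0 = (α / 2 + r3) * g α 0)
    (hw1 : w 1 = (α / 2 + r3) * g α 1 + ((2 - α) / 2 - 2 * r3) * g α 0
      - ((α / 2 + r3) * Real.exp (lam * h) + ((2 - α) / 2 - 2 * r3)
          + r3 * Real.exp (-(lam * h))) * (1 - Real.exp (-(lam * h))) ^ α)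
    (hwj : ∀ j, 2 ≤ j →
      w j = (α / 2 + r3) * g α j + ((2 - α) / 2 - 2 * r3) * g α (j - 1) + r3 * g α (j - 2)) :
    HasSum (fun j : ℕ => Real.exp (-((j : ℝ) - 1) * lam * h) * w j) 0 := by
  set E := Real.exp (-(lam * h)) with hEdef
  set u := Real.exp (lam * h) with hudef
  have hE0 : 0 < E := Real.exp_pos _
  have hE1 : E ≤ 1 := by
    rw [hEdef, ← Real.exp_zero]
    exact Real.exp_le_exp.mpr (by nlinarith)
  have huE : u * E = 1 := by
    rw [hudef, hEdef, ← Real.exp_add]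
    simp
  have hexp : ∀ j : ℕ, Real.exp (-((j : ℝ) - 1) * lam * h) = u * E ^ j := by
    intro j
    rw [hEdef, hudef, ← Real.exp_nat_mul, ← Real.exp_add]
    congr 1
    push_cast
    ring
  set G := (1 - E) ^ α with hGdef
  have hG : HasSum (fun n => g α n * E ^ n) G := key_hasSum hα1 hα2 hE0 hE1
  set r1 := α / 2 + r3 with hr1
  set r2 := (2 - α) / 2 - 2 * r3 with hr2
  have hFeq : (fun j : ℕ => Real.exp (-((j : ℝ) - 1) * lam * h) * w j)
      = fun j : ℕ => (u * E ^ j) * w j := funext fun j => by rw [hexp j]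
  rw [hFeq]
  apply (hasSum_nat_add_iff' (f := fun j : ℕ => (u * E ^ j) * w j) 2).mp
  have h2 := (hasSum_nat_add_iff' (f := fun n : ℕ => g α n * E ^ n) 2).mpr hG
  have h1 := (hasSum_nat_add_iff' (f := fun n : ℕ => g α n * E ^ n) 1).mpr hG
  have combo := (h2.mul_left (u * r1)).add
    ((h1.mul_left (u * r2 * E)).add (hG.mul_left (u * r3 * E ^ 2)))
  have hfun : (fun n : ℕ => u * r1 * (g α (n + 2) * E ^ (n + 2))
        + (u * r2 * E * (g α (n + 1) * E ^ (n + 1)) + u * r3 * E ^ 2 * (g α n * E ^ n)))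
      = fun n : ℕ => (u * E ^ (n + 2)) * w (n + 2) := by
    funext n
    rw [hwj (n + 2) (by omega)]
    have e1 : (n + 2 : ℕ) - 1 = n + 1 := rfl
    have e2 : (n + 2 : ℕ) - 2 = n := rfl
    rw [e1, e2]
    ring
  rw [hfun] at combo
  convert combo using 1
  · rfl
  rw [Finset.sum_range_succ, Finset.sum_range_succ, Finset.sum_range_zero,
    Finset.sum_range_succ, Finset.sum_range_one]
  rw [hw0, hw1, g_zero, g_one]
  linear_combination (G * r1 * u) * huE
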